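/- Let J be a strongly stable monomial ideal in A[x₀,…,xₙ] over a commutative noetherian ring A and F_J a J-marked set. Then F_J is a J-marked basis if and only if for every f_α ∈ F_J (with head term x^α of degree d) and every variable x_i with i > min x^α, the polynomial x_i f_α lies in the A-span ⟨F_J^{(d+1)}⟩; equivalently, if and only if every Eliahou–Kervaire S-polynomial S^{EK}(f_α, f_β) = x_i f_α − x^ν f_β (where i > min x^α and x_i x^α = x^β ∗_J x^ν with x^β ∈ B_J) lies in ⟨F_J^{(s)}⟩ for s its degree. -/

import Mathlib

open MvPolynomial

noncomputable section

/-- Exponent vectors of monomials in the variables `x₀, …, xₙ`. -/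
abbrev Mon (n : ℕ) : Type := Fin (n + 1) →₀ ℕ

namespace MarkedFamilies

variable {n : ℕ}

/-- The total degree of a monomial given by its exponent vector. -/
def mdeg (α : Mon n) : ℕ := α.sum fun _ e => e

/-- A monomial ideal, identified with its (upward closed) set of monomials. -/
def IsMonomialIdeal (J : Set (Mon n)) : Prop := ∀ α ∈ J, ∀ δ : Mon n, α + δ ∈ J

/-- A strongly stable monomial ideal: a monomial ideal such that for every monomial
`x^α ∈ J`, every variable `x_j` dividing `x^α` and every `i > j`, `(x_i/x_j)·x^α ∈ J`. -/
def IsStronglyStable (J : Set (Mon n)) : Prop :=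
  IsMonomialIdeal J ∧
    ∀ α ∈ J, ∀ j : Fin (n + 1), α j ≠ 0 → ∀ i : Fin (n + 1), j < i →
      α - Finsupp.single j 1 + Finsupp.single i 1 ∈ J

/-- The minimal monomial generators `B_J` of a monomial ideal `J`. -/
def minGens (J : Set (Mon n)) : Set (Mon n) :=
  {α | α ∈ J ∧ ∀ j : Fin (n + 1), α j ≠ 0 → α - Finsupp.single j 1 ∉ J}

/-- `min x^γ ≥ max x^δ`: every variable dividing `x^γ` is at least every variable
dividing `x^δ` (vacuously true when either monomial is `1`). -/
def minGeMax (γ δ : Mon n) : Prop := ∀ i ∈ γ.support, ∀ j ∈ δ.support, j ≤ i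

/-- Lexicographic order induced by `x₀ < ⋯ < xₙ`: `a <ₗₑₓ b` iff at the largest
index where they differ, `a` has the smaller exponent. -/
def lexLt (a b : Mon n) : Prop :=
  ∃ i : Fin (n + 1), a i < b i ∧ ∀ j : Fin (n + 1), i < j → a j = b j

/-- A saturated strongly stable ideal: strongly stable and no minimal generator is
divisible by `x₀`. -/
def IsSaturatedSS (J : Set (Mon n)) : Prop :=
  IsStronglyStable J ∧ ∀ α ∈ minGens J, α 0 = 0

/-- The truncation `J_{≥ t}`: the (monomial) ideal generated by the monomials of `J`
of degree at least `t`. -/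
def truncSet (J : Set (Mon n)) (t : ℕ) : Set (Mon n) := {α | α ∈ J ∧ t ≤ mdeg α}

section Ring

variable (A : Type*) [CommRing A]

/-- `⟨N(J)⟩`: the `A`-span of the monomials not in `J`. -/
def nSpan (J : Set (Mon n)) : Submodule A (MvPolynomial (Fin (n + 1)) A) :=
  Submodule.span A {p | ∃ β : Mon n, β ∉ J ∧ p = monomial β (1 : A)}

/-- `⟨N(J)_s⟩`: the `A`-span of the monomials of degree `s` not in `J`. -/
def nSpanDeg (J : Set (Mon n)) (s : ℕ) : Submodule A (MvPolynomial (Fin (n + 1)) A) :=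
  Submodule.span A {p | ∃ β : Mon n, β ∉ J ∧ mdeg β = s ∧ p = monomial β (1 : A)}

/-- `I_s`: the degree-`s` homogeneous component of an ideal, as an `A`-submodule. -/
def idealDeg (I : Ideal (MvPolynomial (Fin (n + 1)) A)) (s : ℕ) :
    Submodule A (MvPolynomial (Fin (n + 1)) A) :=
  Submodule.restrictScalars A I ⊓ homogeneousSubmodule (Fin (n + 1)) A s

/-- `I_{≥ s}`: the ideal `⊕_{t ≥ s} I_t`, i.e. the ideal generated by the homogeneous
elements of `I` of degree at least `s`. -/
def idealGeq (I : Ideal (MvPolynomial (Fin (n + 1)) A)) (s : ℕ) :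
    Ideal (MvPolynomial (Fin (n + 1)) A) :=
  Ideal.span {f | f ∈ I ∧ ∃ t : ℕ, s ≤ t ∧ f.IsHomogeneous t}

/-- A homogeneous ideal of the polynomial ring. -/
def IsHomogIdeal (I : Ideal (MvPolynomial (Fin (n + 1)) A)) : Prop :=
  ∀ f ∈ I, ∀ s : ℕ, homogeneousComponent s f ∈ I

variable {A}

/-- A `J`-marked set: a family assigning to each minimal generator `x^α ∈ B_J` a
polynomial `f_α = x^α − Σ_{x^β ∈ N(J)_{|α|}} c_{αβ} x^β`. -/
def IsMarkedSet (J : Set (Mon n)) (F : Mon n → MvPolynomial (Fin (n + 1)) A) : Prop :=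
  ∀ α ∈ minGens J, (F α).coeff α = 1 ∧
    ∀ β ∈ (F α).support, β ≠ α → β ∉ J ∧ mdeg β = mdeg α

/-- The ideal generated by a marked set. -/
def markedIdeal (J : Set (Mon n)) (F : Mon n → MvPolynomial (Fin (n + 1)) A) :
    Ideal (MvPolynomial (Fin (n + 1)) A) :=
  Ideal.span (F '' minGens J)

/-- A `J`-marked basis: a `J`-marked set `F` with `A[x] = (F) ⊕ ⟨N(J)⟩` as `A`-modules. -/
def IsMarkedBasis (J : Set (Mon n)) (F : Mon n → MvPolynomial (Fin (n + 1)) A) : Prop :=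
  IsMarkedSet J F ∧
    IsCompl (Submodule.restrictScalars A (markedIdeal J F)) (nSpan A J)

/-- `F_J^{(s)} = { x^δ f_α : deg(x^δ f_α) = s, min x^α ≥ max x^δ }`. -/
def FSet (J : Set (Mon n)) (F : Mon n → MvPolynomial (Fin (n + 1)) A) (s : ℕ) :
    Set (MvPolynomial (Fin (n + 1)) A) :=
  {p | ∃ α δ : Mon n, α ∈ minGens J ∧ mdeg α + mdeg δ = s ∧ minGeMax α δ ∧
        p = monomial δ (1 : A) * F α}

/-- `F̂_J^{(s)} = { x^δ f_α : deg(x^δ f_α) = s, min x^α < max x^δ }`. -/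
def FHatSet (J : Set (Mon n)) (F : Mon n → MvPolynomial (Fin (n + 1)) A) (s : ℕ) :
    Set (MvPolynomial (Fin (n + 1)) A) :=
  {p | ∃ α δ : Mon n, α ∈ minGens J ∧ mdeg α + mdeg δ = s ∧ ¬ minGeMax α δ ∧
        p = monomial δ (1 : A) * F α}

/-- `SF_J^{(s)} = { x^δ f_β − x^γ f_α : x^δ f_β ∈ F̂_J^{(s)}, x^γ f_α ∈ F_J^{(s)},
x^δ x^β = x^γ x^α }`. -/
def SFSet (J : Set (Mon n)) (F : Mon n → MvPolynomial (Fin (n + 1)) A) (s : ℕ) :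
    Set (MvPolynomial (Fin (n + 1)) A) :=
  {p | ∃ α γ β δ : Mon n, α ∈ minGens J ∧ β ∈ minGens J ∧
      mdeg β + mdeg δ = s ∧ ¬ minGeMax β δ ∧
      mdeg α + mdeg γ = s ∧ minGeMax α γ ∧
      δ + β = γ + α ∧ p = monomial δ (1 : A) * F β - monomial γ (1 : A) * F α}

/-- A `(J_s)`-marked set: one marked polynomial `f̃_γ = x^γ − Σ_{x^δ ∈ N(J)_s} d_{γδ} x^δ`
for each monomial `x^γ` of degree `s` in `J`. -/
def IsTruncMarkedSet (J : Set (Mon n)) (s : ℕ)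
    (f : Mon n → MvPolynomial (Fin (n + 1)) A) : Prop :=
  ∀ γ : Mon n, γ ∈ J → mdeg γ = s →
    (f γ).coeff γ = 1 ∧ ∀ β ∈ (f γ).support, β ≠ γ → β ∉ J ∧ mdeg β = s

end Ring

/-- Index set for the generic coefficients `C_{αβ}` (`x^α ∈ B_J`, `x^β ∈ N(J)_{|α|}`). -/
abbrev CIdx (J : Set (Mon n)) : Type :=
  {p : Mon n × Mon n // p.1 ∈ minGens J ∧ p.2 ∉ J ∧ mdeg p.2 = mdeg p.1}

/-- The coefficient ring `ℤ[C]`. -/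
abbrev ZC (J : Set (Mon n)) : Type := MvPolynomial (CIdx J) ℤ

/-- The generic `J`-marked set `𝓕_J = { x^α − Σ_{x^β ∈ N(J)_{|α|}} C_{αβ} x^β }`
in `ℤ[C][x]`, characterized through its coefficients. -/
def IsGenericMarkedSet (J : Set (Mon n))
    (𝓕 : Mon n → MvPolynomial (Fin (n + 1)) (ZC J)) : Prop :=
  ∀ α : Mon n, ∀ hα : α ∈ minGens J,
    (𝓕 α).coeff α = 1 ∧
    (∀ γ : Mon n, ∀ hγ : γ ∉ J ∧ mdeg γ = mdeg α,
      (𝓕 α).coeff γ = - MvPolynomial.X ⟨(α, γ), hα, hγ.1, hγ.2⟩) ∧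
    (∀ γ : Mon n, γ ≠ α → ¬(γ ∉ J ∧ mdeg γ = mdeg α) → (𝓕 α).coeff γ = 0)

/-- The ideal `𝔦_J ⊆ ℤ[C]` generated by the `x`-coefficients of all polynomials
in `(𝓕_J) ∩ ⟨N(J)⟩`. -/
def markedCoeffIdeal (J : Set (Mon n))
    (𝓕 : Mon n → MvPolynomial (Fin (n + 1)) (ZC J)) : Ideal (ZC J) :=
  Ideal.span {c : ZC J | ∃ p : MvPolynomial (Fin (n + 1)) (ZC J),
    p ∈ markedIdeal J 𝓕 ∧ p ∈ nSpan (ZC J) J ∧ ∃ γ : Mon n, p.coeff γ = c}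

/-- The evaluation homomorphism `φ_{F_J} : ℤ[C] → A`, `C_{αβ} ↦ c_{αβ}`, associated to a
`J`-marked set `F` with `f_α = x^α − Σ c_{αβ} x^β` (so `c_{αβ} = −(F α).coeff β`). -/
noncomputable def evalHom (J : Set (Mon n)) {A : Type*} [CommRing A]
    (F : Mon n → MvPolynomial (Fin (n + 1)) A) : ZC J →+* A :=
  MvPolynomial.eval₂Hom (Int.castRingHom A) fun p => -((F p.val.1).coeff p.val.2)

/-- `x^γ` is the `σ`-leading monomial of `g` (with nonzero leading coefficient). -/
def IsLeadingMon {A : Type*} [CommRing A] (σlt : Mon n → Mon n → Prop)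
    (g : MvPolynomial (Fin (n + 1)) A) (γ : Mon n) : Prop :=
  g.coeff γ ≠ 0 ∧ ∀ δ ∈ g.support, δ ≠ γ → σlt δ γ

/-- `LC(I, x^γ)`: the set of leading coefficients at `x^γ` of elements of `I`,
together with `0`. -/
def LCset {A : Type*} [CommRing A] (σlt : Mon n → Mon n → Prop)
    (I : Ideal (MvPolynomial (Fin (n + 1)) A)) (γ : Mon n) : Set A :=
  {a | ∃ g ∈ I, IsLeadingMon σlt g γ ∧ g.coeff γ = a} ∪ {0}

/-- A monic ideal with respect to the term ordering `σ`. -/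
def IsMonicIdeal {A : Type*} [CommRing A] (σlt : Mon n → Mon n → Prop)
    (I : Ideal (MvPolynomial (Fin (n + 1)) A)) : Prop :=
  ∀ γ : Mon n, LCset σlt I γ = {0} ∨ LCset σlt I γ = Set.univ

/-- The set of `σ`-leading monomials of elements of `I` (i.e. `in_σ(I)`,
identified with its set of monomials). -/
def leadingMons {A : Type*} [CommRing A] (σlt : Mon n → Mon n → Prop)
    (I : Ideal (MvPolynomial (Fin (n + 1)) A)) : Set (Mon n) :=
  {γ | ∃ g ∈ I, IsLeadingMon σlt g γ}

end MarkedFamilies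
end

noncomputable section
namespace MarkedFamilies
variable {n : ℕ}

-- ### basic mdeg / Finsupp lemmas

lemma mdeg_eq_sum (a : Mon n) : mdeg a = ∑ i, a i :=
  Finsupp.sum_fintype _ _ (fun _ => rfl)

lemma mdeg_add (a b : Mon n) : mdeg (a + b) = mdeg a + mdeg b := by
  simp [mdeg_eq_sum, Finsupp.add_apply, Finset.sum_add_distrib]

lemma mdeg_single (i : Fin (n + 1)) (k : ℕ) : mdeg (Finsupp.single i k) = k := by
  classical
  simp [mdeg, Finsupp.sum_single_index]

@[simp] lemma mdeg_zero : mdeg (0 : Mon n) = 0 := by simp [mdeg]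

lemma mdeg_eq_zero {a : Mon n} (h : mdeg a = 0) : a = 0 := by
  rw [mdeg_eq_sum] at h
  ext i
  have := Finset.sum_eq_zero_iff.mp h i (Finset.mem_univ i)
  simpa using this

lemma single_le_of_ne {a : Mon n} {j : Fin (n + 1)} (h : a j ≠ 0) :
    Finsupp.single j 1 ≤ a := by
  rw [Finsupp.single_le_iff]; omega

lemma sub_single_add {a : Mon n} {j : Fin (n + 1)} (h : a j ≠ 0) :
    a - Finsupp.single j 1 + Finsupp.single j 1 = a :=
  tsub_add_cancel_of_le (single_le_of_ne h)

lemma mdeg_sub_single {a : Mon n} {j : Fin (n + 1)} (h : a j ≠ 0) :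
    mdeg (a - Finsupp.single j 1) + 1 = mdeg a := by
  have := mdeg_add (a - Finsupp.single j 1) (Finsupp.single j 1)
  rw [sub_single_add h, mdeg_single] at this
  omega

lemma add_sub_single (a : Mon n) {b : Mon n} {j : Fin (n + 1)} (h : b j ≠ 0) :
    a + (b - Finsupp.single j 1) = a + b - Finsupp.single j 1 := by
  ext i
  rcases eq_or_ne j i with rfl | hji
  · simp only [Finsupp.add_apply, Finsupp.tsub_apply, Finsupp.single_eq_same]
    omega
  · simp only [Finsupp.add_apply, Finsupp.tsub_apply, Finsupp.single_eq_of_ne' hji]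
    omega

lemma minGeMax_zero (α : Mon n) : minGeMax α 0 := by
  intro i hi j hj
  simp at hj

lemma minGeMax_mono {α δ δ' : Mon n} (h : minGeMax α δ) (hle : ∀ i, δ' i ≤ δ i) :
    minGeMax α δ' := by
  intro i hi j hj
  exact h i hi j (Finsupp.mem_support_iff.mpr (fun h0 => by
    have := hle j; rw [h0] at this; exact Finsupp.mem_support_iff.mp hj (Nat.le_zero.mp this)))

-- ### lexLt facts

lemma lexLt_irrefl (a : Mon n) : ¬ lexLt a a := by
  rintro ⟨i, hi, -⟩; exact lt_irrefl _ hi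

def emb (a : Mon n) : Lex ((Fin (n + 1))ᵒᵈ →₀ ℕ) :=
  toLex (Finsupp.equivMapDomain OrderDual.toDual a)

lemma ofLex_emb (a : Mon n) (j : (Fin (n + 1))ᵒᵈ) :
    ofLex (emb a) j = a (OrderDual.ofDual j) := rfl

lemma emb_lt_iff {a b : Mon n} : emb a < emb b ↔ lexLt a b := by
  rw [Finsupp.Lex.lt_iff]
  constructor
  · rintro ⟨i, hji, hlt⟩
    refine ⟨OrderDual.ofDual i, hlt, fun j hj => ?_⟩
    exact hji (OrderDual.toDual j) (by exact_mod_cast hj)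
  · rintro ⟨i, hlt, hji⟩
    refine ⟨OrderDual.toDual i, fun j hj => ?_, hlt⟩
    exact hji (OrderDual.ofDual j) (by exact_mod_cast hj)

lemma lexLt_wf : WellFounded (lexLt (n := n)) := by
  have h : WellFoundedLT (Lex ((Fin (n + 1))ᵒᵈ →₀ ℕ)) :=
    Finsupp.Lex.wellFoundedLT_of_finite
  have h2 : WellFounded (InvImage (· < ·) (emb (n := n))) := InvImage.wf emb h.wf
  exact Subrelation.wf (fun {a b} hab => (emb_lt_iff.mpr hab : emb a < emb b)) h2

-- ### factorization

lemma exists_factorization {J : Set (Mon n)} (hJ : IsStronglyStable J) :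
    ∀ k (η : Mon n), mdeg η ≤ k → η ∈ J →
      ∃ α δ : Mon n, α ∈ minGens J ∧ minGeMax α δ ∧ α + δ = η := by
  intro k
  induction k with
  | zero =>
    intro η hk hη
    have : η = 0 := mdeg_eq_zero (Nat.le_zero.mp hk)
    subst this
    exact ⟨0, 0, ⟨hη, fun j hj => by simp at hj⟩, minGeMax_zero 0, by simp⟩
  | succ k IH =>
    intro η hk hη
    rcases eq_or_ne η 0 with rfl | hne
    · exact ⟨0, 0, ⟨hη, fun j hj => by simp at hj⟩, minGeMax_zero 0, by simp⟩
    · have hsupp : η.support.Nonempty := Finsupp.support_nonempty_iff.mpr hne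
      set j := η.support.min' hsupp with hj
      have hjmem : j ∈ η.support := η.support.min'_mem hsupp
      have hjne : η j ≠ 0 := Finsupp.mem_support_iff.mp hjmem
      by_cases hsub : η - Finsupp.single j 1 ∈ J
      · have hd : mdeg (η - Finsupp.single j 1) ≤ k := by
          have := mdeg_sub_single hjne; omega
        obtain ⟨α, δ', hα, hmm, heq⟩ := IH _ hd hsub
        refine ⟨α, δ' + Finsupp.single j 1, hα, ?_, ?_⟩
        · intro i hi jj hjj
          have hjj' := Finsupp.mem_support_iff.mp hjj
          rcases eq_or_ne jj j with rfl | hne2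
          · -- jj = j : j ≤ i since i ∈ supp α ⊆ supp η
            have hαi : α i ≠ 0 := Finsupp.mem_support_iff.mp hi
            have hηi : η i ≠ 0 := by
              have := DFunLike.congr_fun (congrArg (· + Finsupp.single j 1) heq) i
              have h2 : α i ≤ η i := by
                have h3 : (α + δ') + Finsupp.single j 1 = η := by
                  rw [heq, sub_single_add hjne]
                have := DFunLike.congr_fun h3 i
                simp only [Finsupp.add_apply] at this
                omega
              omega
            exact η.support.min'_le i (Finsupp.mem_support_iff.mpr hηi)
          · have : δ' jj ≠ 0 := by
              simp only [Finsupp.add_apply, Finsupp.single_eq_of_ne' (Ne.symm hne2)] at hjj'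
              omega
            exact hmm i hi jj (Finsupp.mem_support_iff.mpr this)
        · rw [← add_assoc, heq, sub_single_add hjne]
      · refine ⟨η, 0, ⟨hη, ?_⟩, minGeMax_zero η, by simp⟩
        intro j' hj' hmem
        rcases eq_or_ne j' j with rfl | hne2
        · exact hsub hmem
        · have hjlt : j < j' :=
            lt_of_le_of_ne (η.support.min'_le j' (Finsupp.mem_support_iff.mpr hj'))
              (Ne.symm hne2)
          have hjne2 : ((η - Finsupp.single j' 1 : Mon n)) j ≠ 0 := by
            rw [Finsupp.tsub_apply, Finsupp.single_eq_of_ne' hne2]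
            omega
          have := hJ.2 _ hmem j hjne2 j' hjlt
          have heq2 : η - Finsupp.single j' 1 - Finsupp.single j 1 + Finsupp.single j' 1
              = η - Finsupp.single j 1 := by
            ext i
            simp only [Finsupp.add_apply, Finsupp.tsub_apply, Finsupp.single_apply]
            rcases eq_or_ne j' i with rfl | h1
            · rw [if_pos rfl, if_neg (by exact fun h => hne2 h.symm : ¬ j = j')]
              omega
            · rw [if_neg h1]
              omega
          rw [heq2] at this
          exact hsub this

lemma factorization_unique {J : Set (Mon n)} (hJ : IsStronglyStable J) :
    ∀ k (α δ α' δ' : Mon n), mdeg δ ≤ k → α ∈ minGens J → α' ∈ minGens J →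
      minGeMax α δ → minGeMax α' δ' → α + δ = α' + δ' → α = α' ∧ δ = δ' := by
  -- auxiliary : if δ = 0 then δ' = 0
  have Z : ∀ (α α' δ' : Mon n), α ∈ minGens J → α' ∈ minGens J → minGeMax α' δ' →
      α = α' + δ' → δ' = 0 := by
    intro α α' δ' hα hα' hmm heq
    by_contra hne
    obtain ⟨j, hj⟩ := Finsupp.support_nonempty_iff.mpr hne
    have hδ'j : δ' j ≠ 0 := Finsupp.mem_support_iff.mp hj
    have hαj : α j ≠ 0 := by
      have := DFunLike.congr_fun heq j
      simp only [Finsupp.add_apply] at this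
      omega
    have hsub : α - Finsupp.single j 1 ∈ J := by
      have : α - Finsupp.single j 1 = α' + (δ' - Finsupp.single j 1) := by
        rw [add_sub_single _ hδ'j, heq]
      rw [this]
      exact hJ.1 α' hα'.1 _
    exact hα.2 j hαj hsub
  intro k
  induction k with
  | zero =>
    intro α δ α' δ' hk hα hα' hmm hmm' heq
    have hδ : δ = 0 := mdeg_eq_zero (Nat.le_zero.mp hk)
    subst hδ
    have hδ' : δ' = 0 := Z α α' δ' hα hα' hmm' (by simpa using heq)
    subst hδ'
    simpa using heq
  | succ k IH =>
    intro α δ α' δ' hk hα hα' hmm hmm' heq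
    rcases eq_or_ne δ 0 with rfl | hδne
    · have hδ' : δ' = 0 := Z α α' δ' hα hα' hmm' (by simpa using heq)
      subst hδ'
      simpa using heq
    rcases eq_or_ne δ' 0 with rfl | hδ'ne
    · have hδ : δ = 0 := Z α' α δ hα' hα hmm (by simpa using heq.symm)
      exact absurd hδ hδne
    -- both nonzero
    have hηne : α + δ ≠ 0 := by
      intro h0
      obtain ⟨kk, hkk⟩ := Finsupp.support_nonempty_iff.mpr hδne
      have h1 := DFunLike.congr_fun h0 kk
      have h2 := Finsupp.mem_support_iff.mp hkk
      simp only [Finsupp.add_apply, Finsupp.coe_zero, Pi.zero_apply] at h1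
      omega
    have hsupp : (α + δ).support.Nonempty := Finsupp.support_nonempty_iff.mpr hηne
    set j := (α + δ).support.min' hsupp with hjdef
    have hjmem : j ∈ (α + δ).support := (α + δ).support.min'_mem hsupp
    -- claim : δ j ≠ 0
    have keyδ : ∀ (a d : Mon n), a ∈ minGens J → minGeMax a d → d ≠ 0 →
        a + d = α + δ → d j ≠ 0 := by
      intro a d ha hmmad hdne heqad hdj
      have haj : a j ≠ 0 := by
        have h1 := DFunLike.congr_fun heqad j
        have h2 := Finsupp.mem_support_iff.mp hjmem
        simp only [Finsupp.add_apply] at h1 h2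
        omega
      obtain ⟨kk, hkk⟩ := Finsupp.support_nonempty_iff.mpr hdne
      have h1 : kk ≤ j := hmmad j (Finsupp.mem_support_iff.mpr haj) kk hkk
      have h2 : (α + δ) kk ≠ 0 := by
        have h3 := DFunLike.congr_fun heqad kk
        have h4 := Finsupp.mem_support_iff.mp hkk
        simp only [Finsupp.add_apply] at h3 ⊢
        omega
      have h3 : j ≤ kk := (α + δ).support.min'_le kk (Finsupp.mem_support_iff.mpr h2)
      have h4 : kk = j := le_antisymm h1 h3
      rw [h4] at hkk
      exact (Finsupp.mem_support_iff.mp hkk) hdj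
    have hδj : δ j ≠ 0 := keyδ α δ hα hmm hδne rfl
    have hδ'j : δ' j ≠ 0 := keyδ α' δ' hα' hmm' hδ'ne heq.symm
    have heq2 : α + (δ - Finsupp.single j 1) = α' + (δ' - Finsupp.single j 1) := by
      rw [add_sub_single _ hδj, add_sub_single _ hδ'j, heq]
    have hkd : mdeg (δ - Finsupp.single j 1) ≤ k := by
      have := mdeg_sub_single hδj; omega
    have hmm2 : minGeMax α (δ - Finsupp.single j 1) :=
      minGeMax_mono hmm (fun i => by rw [Finsupp.tsub_apply]; omega)
    have hmm2' : minGeMax α' (δ' - Finsupp.single j 1) :=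
      minGeMax_mono hmm' (fun i => by rw [Finsupp.tsub_apply]; omega)
    obtain ⟨h1, h2⟩ := IH α (δ - Finsupp.single j 1) α' (δ' - Finsupp.single j 1)
      hkd hα hα' hmm2 hmm2' heq2
    refine ⟨h1, ?_⟩
    have h3 := congrArg (· + Finsupp.single j 1) h2
    simpa [sub_single_add hδj, sub_single_add hδ'j] using h3

-- ### Lemma L

lemma lexLt_of_tail {J : Set (Mon n)} (hJ : IsStronglyStable J) {β δ α' δ' : Mon n}
    (hβ : β ∉ J) (hα' : α' ∈ minGens J) (hmm : minGeMax α' δ')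
    (heq : α' + δ' = δ + β) : lexLt δ' δ := by
  by_contra hnot
  have hne : δ' ≠ δ := by
    rintro rfl
    have : α' = β := by
      have := congrArg (fun x => x - δ') heq
      have h2 : α' + δ' = β + δ' := by rw [heq, add_comm]
      exact add_right_cancel h2
    exact hβ (this ▸ hα'.1)
  -- largest differing index
  have hD : (Finset.univ.filter (fun i : Fin (n + 1) => δ' i ≠ δ i)).Nonempty := by
    by_contra hD
    apply hne
    ext i
    by_contra hi
    exact hD ⟨i, Finset.mem_filter.mpr ⟨Finset.mem_univ i, hi⟩⟩
  set u := (Finset.univ.filter (fun i : Fin (n + 1) => δ' i ≠ δ i)).max' hD with hu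
  have humem := (Finset.univ.filter (fun i : Fin (n + 1) => δ' i ≠ δ i)).max'_mem hD
  have huneq : δ' u ≠ δ u := (Finset.mem_filter.mp humem).2
  have hgt : ∀ j, u < j → δ' j = δ j := by
    intro j hjgt
    by_contra hj
    have := (Finset.univ.filter (fun i : Fin (n + 1) => δ' i ≠ δ i)).le_max'
      j (Finset.mem_filter.mpr ⟨Finset.mem_univ j, hj⟩)
    omega
  have hup : δ u < δ' u := by
    rcases lt_or_gt_of_ne huneq with h | h
    · exact absurd ⟨u, h, hgt⟩ hnot
    · exact h
  -- pointwise equation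
  have hpt : ∀ i, α' i + δ' i = δ i + β i := by
    intro i
    have := DFunLike.congr_fun heq i
    simpa [Finsupp.add_apply] using this
  -- α' ≤ β
  have hle : α' ≤ β := by
    rw [Finsupp.le_def]
    intro i
    rcases lt_trichotomy i u with h | rfl | h
    · -- i < u : α' i = 0
      by_contra hcon
      push_neg at hcon
      have hα'i : α' i ≠ 0 := by omega
      have : u ≤ i := hmm i (Finsupp.mem_support_iff.mpr hα'i) u
        (Finsupp.mem_support_iff.mpr (by omega))
      omega
    · have := hpt u; omega
    · have := hpt i; have := hgt i h; omega
  have : β ∈ J := by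
    have h2 : α' + (β - α') = β := add_tsub_cancel_of_le hle
    rw [← h2]
    exact hJ.1 α' hα'.1 _
  exact hβ this




section RingAux

variable {A : Type*} [CommRing A] {J : Set (Mon n)}
variable {F : Mon n → MvPolynomial (Fin (n + 1)) A}

lemma X_as_monomial (i : Fin (n + 1)) :
    (X i : MvPolynomial (Fin (n + 1)) A) = monomial (Finsupp.single i 1) 1 := rfl

lemma mem_nSpan_monomial {β : Mon n} (hβ : β ∉ J) (c : A) :
    (monomial β c : MvPolynomial (Fin (n + 1)) A) ∈ nSpan A J := by
  have h1 : (monomial β c : MvPolynomial (Fin (n + 1)) A) = c • monomial β 1 := by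
    rw [MvPolynomial.smul_monomial, smul_eq_mul, mul_one]
  rw [h1]
  exact Submodule.smul_mem _ c (Submodule.subset_span ⟨β, hβ, rfl⟩)

lemma coeff_eq_zero_of_mem_nSpan {p : MvPolynomial (Fin (n + 1)) A} (hp : p ∈ nSpan A J)
    {η : Mon n} (hη : η ∈ J) : p.coeff η = 0 := by
  induction hp using Submodule.span_induction with
  | mem x hx =>
    obtain ⟨β, hβ, rfl⟩ := hx
    rw [MvPolynomial.coeff_monomial, if_neg]
    rintro rfl; exact hβ hη
  | zero => simp
  | add x y hx hy ihx ihy => simp [MvPolynomial.coeff_add, ihx, ihy]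
  | smul a x hx ih => simp [MvPolynomial.coeff_smul, ih]

def tailF (F : Mon n → MvPolynomial (Fin (n + 1)) A) (α : Mon n) :
    MvPolynomial (Fin (n + 1)) A :=
  F α - monomial α 1

lemma F_eq_tail (α : Mon n) : F α = monomial α 1 + tailF F α := by rw [tailF]; ring

lemma tail_coeff_self (hF : IsMarkedSet J F) {α : Mon n} (hα : α ∈ minGens J) :
    (tailF F α).coeff α = 0 := by
  simp [tailF, MvPolynomial.coeff_sub, MvPolynomial.coeff_monomial, (hF α hα).1]

lemma tail_support (hF : IsMarkedSet J F) {α : Mon n} (hα : α ∈ minGens J) {β : Mon n}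
    (hβ : β ∈ (tailF F α).support) : β ∉ J ∧ mdeg β = mdeg α := by
  have hne : β ≠ α := by
    rintro rfl
    exact MvPolynomial.mem_support_iff.mp hβ (tail_coeff_self hF hα)
  have hcoeff : (F α).coeff β ≠ 0 := by
    have h1 := MvPolynomial.mem_support_iff.mp hβ
    rwa [tailF, MvPolynomial.coeff_sub, MvPolynomial.coeff_monomial,
      if_neg (fun h => hne h.symm), sub_zero] at h1
  exact (hF α hα).2 β (MvPolynomial.mem_support_iff.mpr hcoeff) hne

lemma monomial_mul_eq_sum (δ : Mon n) (p : MvPolynomial (Fin (n + 1)) A) :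
    monomial δ 1 * p = ∑ β ∈ p.support, monomial (δ + β) (p.coeff β) := by
  conv_lhs => rw [p.as_sum]
  rw [Finset.mul_sum]
  refine Finset.sum_congr rfl (fun β _ => ?_)
  rw [MvPolynomial.monomial_mul, one_mul]

lemma key_identity (δ : Mon n) (α : Mon n) :
    (monomial (α + δ) 1 : MvPolynomial (Fin (n + 1)) A)
      = monomial δ 1 * F α
        - ∑ β ∈ (tailF F α).support, monomial (δ + β) ((tailF F α).coeff β) := by
  have h1 : monomial δ 1 * F α
      = monomial δ 1 * monomial α 1 + monomial δ 1 * tailF F α := by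
    rw [← mul_add, ← F_eq_tail]
  rw [h1, monomial_mul_eq_sum δ (tailF F α), MvPolynomial.monomial_mul, one_mul,
    add_comm α δ]
  ring

lemma mem_FSet {α : Mon n} (δ : Mon n) (hα : α ∈ minGens J) (hmm : minGeMax α δ) :
    monomial δ (1 : A) * F α ∈ FSet J F (mdeg α + mdeg δ) :=
  ⟨α, δ, hα, rfl, hmm, rfl⟩

lemma red (hJ : IsStronglyStable J) (hF : IsMarkedSet J F) :
    ∀ δ α : Mon n, α ∈ minGens J → minGeMax α δ →
      (monomial (α + δ) 1 : MvPolynomial (Fin (n + 1)) A)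
        ∈ Submodule.span A (FSet J F (mdeg (α + δ))) ⊔ nSpan A J := by
  intro δ
  refine lexLt_wf.induction (C := fun δ => ∀ α : Mon n, α ∈ minGens J → minGeMax α δ →
      (monomial (α + δ) 1 : MvPolynomial (Fin (n + 1)) A)
        ∈ Submodule.span A (FSet J F (mdeg (α + δ))) ⊔ nSpan A J) δ ?_
  intro δ IH α hα hmm
  have hmem : monomial δ (1 : A) * F α ∈ Submodule.span A (FSet J F (mdeg α + mdeg δ)) :=
    Submodule.subset_span (mem_FSet δ hα hmm)
  rw [key_identity δ α, mdeg_add]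
  refine Submodule.sub_mem _ (Submodule.mem_sup_left hmem) (Submodule.sum_mem _ ?_)
  intro β hβ
  obtain ⟨hβJ, hβdeg⟩ := tail_support hF hα hβ
  have hsm : (monomial (δ + β) ((tailF F α).coeff β) : MvPolynomial (Fin (n + 1)) A)
      = (tailF F α).coeff β • monomial (δ + β) 1 := by
    rw [MvPolynomial.smul_monomial, smul_eq_mul, mul_one]
  by_cases hin : δ + β ∈ J
  · obtain ⟨α'', δ'', hα'', hmm'', heq''⟩ :=
      exists_factorization hJ (mdeg (δ + β)) _ le_rfl hin
    have hlex : lexLt δ'' δ := lexLt_of_tail hJ hβJ hα'' hmm'' heq''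
    have hIH := IH δ'' hlex α'' hα'' hmm''
    rw [heq''] at hIH
    have hdeg2 : mdeg (δ + β) = mdeg α + mdeg δ := by
      rw [mdeg_add, hβdeg]; ring
    rw [hdeg2] at hIH
    rw [hsm]
    exact Submodule.smul_mem _ _ hIH
  · rw [hsm]
    exact Submodule.smul_mem _ _ (Submodule.mem_sup_right
      (mem_nSpan_monomial hin 1))

lemma red_poly (hJ : IsStronglyStable J) (hF : IsMarkedSet J F) {s : ℕ}
    {p : MvPolynomial (Fin (n + 1)) A} (hp : ∀ η ∈ p.support, mdeg η = s) :
    p ∈ Submodule.span A (FSet J F s) ⊔ nSpan A J := by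
  rw [p.as_sum]
  refine Submodule.sum_mem _ (fun η hη => ?_)
  have hsm : (monomial η (p.coeff η) : MvPolynomial (Fin (n + 1)) A)
      = p.coeff η • monomial η 1 := by
    rw [MvPolynomial.smul_monomial, smul_eq_mul, mul_one]
  by_cases hin : η ∈ J
  · obtain ⟨α, δ, hα, hmm, heq⟩ := exists_factorization hJ (mdeg η) η le_rfl hin
    have h1 := red hJ hF δ α hα hmm
    rw [heq, hp η hη] at h1
    rw [hsm]
    exact Submodule.smul_mem _ _ h1
  · rw [hsm]
    exact Submodule.smul_mem _ _ (Submodule.mem_sup_right (mem_nSpan_monomial hin 1))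

lemma FSet_le_markedIdeal {s : ℕ} :
    Submodule.span A (FSet J F s) ≤ Submodule.restrictScalars A (markedIdeal J F) := by
  rw [Submodule.span_le]
  rintro p ⟨α, δ, hα, -, -, rfl⟩
  exact Ideal.mul_mem_left _ _ (Ideal.subset_span ⟨α, hα, rfl⟩)

lemma mdeg_support_F (hF : IsMarkedSet J F) {α : Mon n} (hα : α ∈ minGens J) :
    ∀ β ∈ (F α).support, mdeg β = mdeg α := by
  intro β hβ
  by_cases hne : β = α
  · rw [hne]
  · exact ((hF α hα).2 β hβ hne).2

lemma support_X_mul (hF : IsMarkedSet J F) {α : Mon n} (hα : α ∈ minGens J)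
    (i : Fin (n + 1)) :
    ∀ η ∈ ((X i : MvPolynomial (Fin (n + 1)) A) * F α).support, mdeg η = mdeg α + 1 := by
  intro η hη
  have hc := MvPolynomial.mem_support_iff.mp hη
  rw [X_as_monomial, MvPolynomial.coeff_monomial_mul'] at hc
  split_ifs at hc with hle
  · rw [one_mul] at hc
    have h2 : η - Finsupp.single i 1 ∈ (F α).support := MvPolynomial.mem_support_iff.mpr hc
    have h3 := mdeg_support_F hF hα _ h2
    have h4 : (η - Finsupp.single i 1) + Finsupp.single i 1 = η := tsub_add_cancel_of_le hle
    have h5 := mdeg_add (η - Finsupp.single i 1) (Finsupp.single i 1)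
    rw [h4, mdeg_single] at h5
    omega
  · exact absurd rfl hc

lemma forward_dir (hJ : IsStronglyStable J) (hF : IsMarkedSet J F)
    (hB : IsMarkedBasis J F) {α : Mon n} (hα : α ∈ minGens J) (i : Fin (n + 1)) :
    (X i : MvPolynomial (Fin (n + 1)) A) * F α
      ∈ Submodule.span A (FSet J F (mdeg α + 1)) := by
  have hp : (X i : MvPolynomial (Fin (n + 1)) A) * F α
      ∈ Submodule.span A (FSet J F (mdeg α + 1)) ⊔ nSpan A J :=
    red_poly hJ hF (support_X_mul hF hα i)
  obtain ⟨q, hq, r, hr, hqr⟩ := Submodule.mem_sup.mp hp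
  have hqI : q ∈ Submodule.restrictScalars A (markedIdeal J F) := FSet_le_markedIdeal hq
  have hpI : (X i : MvPolynomial (Fin (n + 1)) A) * F α ∈ markedIdeal J F :=
    Ideal.mul_mem_left _ _ (Ideal.subset_span ⟨α, hα, rfl⟩)
  have hrI : r ∈ Submodule.restrictScalars A (markedIdeal J F) := by
    have hre : r = (X i : MvPolynomial (Fin (n + 1)) A) * F α - q := by
      rw [← hqr]; ring
    rw [hre]
    exact Submodule.sub_mem _ hpI hqI
  have hr0 : r = 0 := Submodule.disjoint_def.mp hB.2.disjoint r hrI hr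
  rw [← hqr, hr0, add_zero]
  exact hq

-- ### Stage 3 : backward direction

lemma hyp_ext (hyp : ∀ α ∈ minGens J, ∀ i : Fin (n + 1),
      (∃ j : Fin (n + 1), α j ≠ 0 ∧ j < i) →
      (X i : MvPolynomial (Fin (n + 1)) A) * F α
        ∈ Submodule.span A (FSet J F (mdeg α + 1))) :
    ∀ α ∈ minGens J, ∀ i : Fin (n + 1),
      (X i : MvPolynomial (Fin (n + 1)) A) * F α
        ∈ Submodule.span A (FSet J F (mdeg α + 1)) := by
  intro α hα i
  by_cases hc : ∃ j, α j ≠ 0 ∧ j < i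
  · exact hyp α hα i hc
  · push_neg at hc
    have hmm : minGeMax α (Finsupp.single i 1) := by
      intro a ha b hb
      have hbi : b = i := Finset.mem_singleton.mp (Finsupp.support_single_subset hb)
      subst hbi
      exact hc a (Finsupp.mem_support_iff.mp ha)
    have h1 : monomial (Finsupp.single i 1) (1 : A) * F α
        ∈ Submodule.span A (FSet J F (mdeg α + mdeg (Finsupp.single i 1))) :=
      Submodule.subset_span (mem_FSet (F := F) (Finsupp.single i 1) hα hmm)
    rw [mdeg_single] at h1
    rwa [X_as_monomial]

lemma mulMonAux :
    ∀ t (δ : Mon n), mdeg δ ≤ t →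
      (∀ j ∈ δ.support, ∀ s (p : MvPolynomial (Fin (n + 1)) A),
        p ∈ Submodule.span A (FSet J F s) →
        (X j : MvPolynomial (Fin (n + 1)) A) * p ∈ Submodule.span A (FSet J F (s + 1))) →
      ∀ s (p : MvPolynomial (Fin (n + 1)) A), p ∈ Submodule.span A (FSet J F s) →
        monomial δ 1 * p ∈ Submodule.span A (FSet J F (s + mdeg δ)) := by
  intro t
  induction t with
  | zero =>
    intro δ hd _ s p hp
    have h0 : δ = 0 := mdeg_eq_zero (Nat.le_zero.mp hd)
    subst h0
    simpa [MvPolynomial.monomial_zero'] using hp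
  | succ t IH =>
    intro δ hd hX s p hp
    rcases eq_or_ne δ 0 with rfl | hne
    · simpa [MvPolynomial.monomial_zero'] using hp
    · obtain ⟨j, hj⟩ := Finsupp.support_nonempty_iff.mpr hne
      have hδj : δ j ≠ 0 := Finsupp.mem_support_iff.mp hj
      have hsplit : (monomial δ 1 : MvPolynomial (Fin (n + 1)) A)
          = X j * monomial (δ - Finsupp.single j 1) 1 := by
        have hsp : Finsupp.single j 1 + (δ - Finsupp.single j 1) = δ := by
          rw [add_comm]; exact sub_single_add hδj
        rw [X_as_monomial, MvPolynomial.monomial_mul, one_mul, hsp]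
      rw [hsplit, mul_assoc]
      have h1 : monomial (δ - Finsupp.single j 1) 1 * p
          ∈ Submodule.span A (FSet J F (s + mdeg (δ - Finsupp.single j 1))) := by
        refine IH _ (by have := mdeg_sub_single hδj; omega) ?_ s p hp
        intro j' hj' s' q hq
        refine hX j' ?_ s' q hq
        have h2 := Finsupp.mem_support_iff.mp hj'
        rw [Finsupp.tsub_apply] at h2
        exact Finsupp.mem_support_iff.mpr (by omega)
      have h2 := hX j hj _ _ h1
      have h3 : s + mdeg (δ - Finsupp.single j 1) + 1 = s + mdeg δ := by
        have := mdeg_sub_single hδj; omega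
      rwa [h3] at h2

lemma mulX (hyp : ∀ α ∈ minGens J, ∀ i : Fin (n + 1),
      (∃ j : Fin (n + 1), α j ≠ 0 ∧ j < i) →
      (X i : MvPolynomial (Fin (n + 1)) A) * F α
        ∈ Submodule.span A (FSet J F (mdeg α + 1))) :
    ∀ i : Fin (n + 1), ∀ s (p : MvPolynomial (Fin (n + 1)) A),
      p ∈ Submodule.span A (FSet J F s) →
      (X i : MvPolynomial (Fin (n + 1)) A) * p ∈ Submodule.span A (FSet J F (s + 1)) := by
  have hyp' := hyp_ext hyp
  suffices H : ∀ m : ℕ, ∀ i : Fin (n + 1), i.val = m → ∀ s (p : MvPolynomial (Fin (n + 1)) A),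
      p ∈ Submodule.span A (FSet J F s) →
      (X i : MvPolynomial (Fin (n + 1)) A) * p ∈ Submodule.span A (FSet J F (s + 1)) by
    intro i; exact H i.val i rfl
  intro m
  induction m using Nat.strong_induction_on with
  | _ m IHm =>
  intro i him s p hp
  induction hp using Submodule.span_induction with
  | mem q hq =>
    obtain ⟨α, δ, hα, hdeg, hmm, rfl⟩ := hq
    by_cases hgood : minGeMax α (δ + Finsupp.single i 1)
    · have he : (X i : MvPolynomial (Fin (n + 1)) A) * (monomial δ 1 * F α)
          = monomial (δ + Finsupp.single i 1) 1 * F α := by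
        rw [X_as_monomial, ← mul_assoc, MvPolynomial.monomial_mul, one_mul,
          add_comm (Finsupp.single i 1) δ]
      rw [he]
      have h1 : monomial (δ + Finsupp.single i 1) (1 : A) * F α
          ∈ Submodule.span A (FSet J F (mdeg α + mdeg (δ + Finsupp.single i 1))) :=
        Submodule.subset_span (mem_FSet (F := F) (δ + Finsupp.single i 1) hα hgood)
      have h2 : mdeg α + mdeg (δ + Finsupp.single i 1) = s + 1 := by
        rw [mdeg_add, mdeg_single]; omega
      rwa [h2] at h1
    · have hbad : ∃ a ∈ α.support, a.val < i.val := by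
        rw [minGeMax] at hgood
        push_neg at hgood
        obtain ⟨a, ha, b, hb, hab⟩ := hgood
        have hbi : b = i := by
          have h2 := Finsupp.mem_support_iff.mp hb
          rw [Finsupp.add_apply] at h2
          by_cases hδb : δ b = 0
          · have : (Finsupp.single i 1 : Mon n) b ≠ 0 := by omega
            have := Finsupp.support_single_subset (Finsupp.mem_support_iff.mpr this)
            exact Finset.mem_singleton.mp this
          · exact absurd (hmm a ha b (Finsupp.mem_support_iff.mpr hδb)) (not_le.mpr hab)
        subst hbi
        exact ⟨a, ha, Fin.lt_def.mp hab⟩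
      obtain ⟨a, ha, hai⟩ := hbad
      have hXF := hyp' α hα i
      have hcomm : (X i : MvPolynomial (Fin (n + 1)) A) * (monomial δ 1 * F α)
          = monomial δ 1 * (X i * F α) := by ring
      rw [hcomm]
      have hj' : ∀ j ∈ δ.support, ∀ s' (q : MvPolynomial (Fin (n + 1)) A),
          q ∈ Submodule.span A (FSet J F s') →
          (X j : MvPolynomial (Fin (n + 1)) A) * q
            ∈ Submodule.span A (FSet J F (s' + 1)) := by
        intro j hjmem s' q hq'
        have hja : j ≤ a := hmm a ha j hjmem
        have hjm : j.val < m := by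
          have : j.val ≤ a.val := hja
          omega
        exact IHm j.val hjm j rfl s' q hq'
      have h1 := mulMonAux (mdeg δ) δ le_rfl hj' (mdeg α + 1) _ hXF
      have hs : mdeg α + 1 + mdeg δ = s + 1 := by omega
      rwa [hs] at h1
  | zero => rw [mul_zero]; exact Submodule.zero_mem _
  | add x y hx hy ihx ihy => rw [mul_add]; exact Submodule.add_mem _ ihx ihy
  | smul c x hx ih => rw [mul_smul_comm]; exact Submodule.smul_mem _ _ ih

lemma mem_V_of_mul_monomial (hyp : ∀ α ∈ minGens J, ∀ i : Fin (n + 1),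
      (∃ j : Fin (n + 1), α j ≠ 0 ∧ j < i) →
      (X i : MvPolynomial (Fin (n + 1)) A) * F α
        ∈ Submodule.span A (FSet J F (mdeg α + 1)))
    (η : Mon n) (p : MvPolynomial (Fin (n + 1)) A)
    (hp : p ∈ Submodule.span A (⋃ s, FSet J F s)) :
    monomial η 1 * p ∈ Submodule.span A (⋃ s, FSet J F s) := by
  induction hp using Submodule.span_induction with
  | mem q hq =>
    obtain ⟨s, hq⟩ := Set.mem_iUnion.mp hq
    have h1 : q ∈ Submodule.span A (FSet J F s) := Submodule.subset_span hq
    have h2 := mulMonAux (mdeg η) η le_rfl (fun j _ => mulX hyp j) s q h1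
    exact Submodule.span_mono (Set.subset_iUnion (fun s => FSet J F s) (s + mdeg η)) h2
  | zero => rw [mul_zero]; exact Submodule.zero_mem _
  | add x y hx hy ihx ihy => rw [mul_add]; exact Submodule.add_mem _ ihx ihy
  | smul c x hx ih => rw [mul_smul_comm]; exact Submodule.smul_mem _ _ ih

lemma mul_mem_V (hyp : ∀ α ∈ minGens J, ∀ i : Fin (n + 1),
      (∃ j : Fin (n + 1), α j ≠ 0 ∧ j < i) →
      (X i : MvPolynomial (Fin (n + 1)) A) * F α
        ∈ Submodule.span A (FSet J F (mdeg α + 1)))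
    (q p : MvPolynomial (Fin (n + 1)) A)
    (hp : p ∈ Submodule.span A (⋃ s, FSet J F s)) :
    q * p ∈ Submodule.span A (⋃ s, FSet J F s) := by
  rw [q.as_sum, Finset.sum_mul]
  refine Submodule.sum_mem _ (fun η hη => ?_)
  have he : (monomial η (q.coeff η) : MvPolynomial (Fin (n + 1)) A) * p
      = q.coeff η • (monomial η 1 * p) := by
    rw [← smul_mul_assoc, MvPolynomial.smul_monomial, smul_eq_mul, mul_one]
  rw [he]
  exact Submodule.smul_mem _ _ (mem_V_of_mul_monomial hyp η p hp)

lemma markedIdeal_le_V (hyp : ∀ α ∈ minGens J, ∀ i : Fin (n + 1),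
      (∃ j : Fin (n + 1), α j ≠ 0 ∧ j < i) →
      (X i : MvPolynomial (Fin (n + 1)) A) * F α
        ∈ Submodule.span A (FSet J F (mdeg α + 1))) :
    ∀ p ∈ markedIdeal J F, p ∈ Submodule.span A (⋃ s, FSet J F s) := by
  intro p hp
  induction hp using Submodule.span_induction with
  | mem q hq =>
    obtain ⟨α, hα, rfl⟩ := hq
    refine Submodule.subset_span (Set.mem_iUnion.mpr ⟨mdeg α, ?_⟩)
    exact ⟨α, 0, hα, by simp, minGeMax_zero α, by simp [MvPolynomial.monomial_zero']⟩
  | zero => exact Submodule.zero_mem _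
  | add x y hx hy ihx ihy => exact Submodule.add_mem _ ihx ihy
  | smul c x hx ih => rw [smul_eq_mul]; exact mul_mem_V hyp c x ih

lemma indep (hJ : IsStronglyStable J) (hF : IsMarkedSet J F) :
    ∀ (T : Finset (Mon n × Mon n)), (∀ pr ∈ T, pr.1 ∈ minGens J ∧ minGeMax pr.1 pr.2) →
      ∀ w : Mon n × Mon n → A,
        (∑ pr ∈ T, w pr • (monomial pr.2 1 * F pr.1)) ∈ nSpan A J →
        (∑ pr ∈ T, w pr • (monomial pr.2 1 * F pr.1)) = 0 := by
  intro T
  induction T using Finset.strongInduction with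
  | _ T IH =>
  intro hT w hmem
  rcases Finset.eq_empty_or_nonempty T with rfl | hne
  · simp
  obtain ⟨pr0, hpr0, hmax⟩ := Finset.exists_max_image T (fun pr => emb pr.2) hne
  have hηJ : pr0.2 + pr0.1 ∈ J := by
    have h1 := hJ.1 pr0.1 (hT pr0 hpr0).1.1 pr0.2
    rwa [add_comm] at h1
  have hc0 : (∑ pr ∈ T, w pr • (monomial pr.2 1 * F pr.1)).coeff (pr0.2 + pr0.1) = 0 :=
    coeff_eq_zero_of_mem_nSpan hmem hηJ
  have hcoeff : ∀ pr ∈ T, pr ≠ pr0 →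
      (monomial pr.2 1 * F pr.1).coeff (pr0.2 + pr0.1) = 0 := by
    intro pr hpr hprne
    rw [MvPolynomial.coeff_monomial_mul']
    split_ifs with hle
    · rw [one_mul]
      by_contra hc
      have hsupp : pr0.2 + pr0.1 - pr.2 ∈ (F pr.1).support :=
        MvPolynomial.mem_support_iff.mpr hc
      have hηeq : pr.2 + (pr0.2 + pr0.1 - pr.2) = pr0.2 + pr0.1 :=
        add_tsub_cancel_of_le hle
      by_cases hβα : pr0.2 + pr0.1 - pr.2 = pr.1
      · rw [hβα] at hηeq
        have heqq : pr0.1 + pr0.2 = pr.1 + pr.2 := by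
          rw [add_comm pr0.1 pr0.2, add_comm pr.1 pr.2, ← hηeq]
        have huniq := factorization_unique hJ (mdeg pr0.2) pr0.1 pr0.2 pr.1 pr.2 le_rfl
          (hT pr0 hpr0).1 (hT pr hpr).1 (hT pr0 hpr0).2 (hT pr hpr).2 heqq
        exact hprne (Prod.ext huniq.1.symm huniq.2.symm)
      · have hβ := (hF pr.1 (hT pr hpr).1).2 _ hsupp hβα
        have hlex : lexLt pr0.2 pr.2 :=
          lexLt_of_tail hJ hβ.1 (hT pr0 hpr0).1 (hT pr0 hpr0).2
            ((add_comm pr0.1 pr0.2).trans hηeq.symm)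
        have h1 := hmax pr hpr
        have h2 := emb_lt_iff.mpr hlex
        exact absurd (lt_of_lt_of_le h2 h1) (lt_irrefl _)
    · rfl
  have hhead : (monomial pr0.2 1 * F pr0.1).coeff (pr0.2 + pr0.1) = 1 := by
    rw [MvPolynomial.coeff_monomial_mul', if_pos le_self_add, one_mul,
      add_tsub_cancel_left]
    exact (hF pr0.1 (hT pr0 hpr0).1).1
  have hsum : (∑ pr ∈ T, w pr • (monomial pr.2 1 * F pr.1)).coeff (pr0.2 + pr0.1)
      = w pr0 := by
    rw [MvPolynomial.coeff_sum]
    have h1 : ∀ b ∈ T, b ≠ pr0 →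
        (w b • (monomial b.2 1 * F b.1)).coeff (pr0.2 + pr0.1) = 0 := by
      intro b hb hbne
      rw [MvPolynomial.coeff_smul, hcoeff b hb hbne, smul_zero]
    rw [Finset.sum_eq_single_of_mem pr0 hpr0 h1, MvPolynomial.coeff_smul, hhead,
      smul_eq_mul, mul_one]
  have hw0 : w pr0 = 0 := by rw [hsum] at hc0; exact hc0
  have hsplit : ∑ pr ∈ T, w pr • (monomial pr.2 1 * F pr.1)
      = ∑ pr ∈ T.erase pr0, w pr • (monomial pr.2 1 * F pr.1) := by
    rw [← Finset.add_sum_erase T _ hpr0, hw0, zero_smul, zero_add]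
  rw [hsplit] at hmem ⊢
  exact IH (T.erase pr0) (Finset.erase_ssubset hpr0)
    (fun pr hpr => hT pr (Finset.mem_of_mem_erase hpr)) w hmem

lemma disj_dir (hJ : IsStronglyStable J) (hF : IsMarkedSet J F)
    (hyp : ∀ α ∈ minGens J, ∀ i : Fin (n + 1),
      (∃ j : Fin (n + 1), α j ≠ 0 ∧ j < i) →
      (X i : MvPolynomial (Fin (n + 1)) A) * F α
        ∈ Submodule.span A (FSet J F (mdeg α + 1))) :
    ∀ p : MvPolynomial (Fin (n + 1)) A, p ∈ markedIdeal J F → p ∈ nSpan A J → p = 0 := by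
  classical
  intro p hpI hpN
  have hpV := markedIdeal_le_V hyp p hpI
  obtain ⟨c, hcsupp, hcsum⟩ := Submodule.mem_span_set.mp hpV
  have hex : ∀ q ∈ c.support, ∃ pr : Mon n × Mon n,
      pr.1 ∈ minGens J ∧ minGeMax pr.1 pr.2 ∧ q = monomial pr.2 1 * F pr.1 := by
    intro q hq
    obtain ⟨s, hq2⟩ := Set.mem_iUnion.mp (hcsupp hq)
    obtain ⟨α, δ, hα, _, hmm, rfl⟩ := hq2
    exact ⟨(α, δ), hα, hmm, rfl⟩
  set ρ : MvPolynomial (Fin (n + 1)) A → Mon n × Mon n :=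
    fun q => if h : ∃ pr : Mon n × Mon n,
      pr.1 ∈ minGens J ∧ minGeMax pr.1 pr.2 ∧ q = monomial pr.2 1 * F pr.1
      then h.choose else (0, 0) with hρ
  have hρP : ∀ q ∈ c.support, (ρ q).1 ∈ minGens J ∧ minGeMax (ρ q).1 (ρ q).2 ∧
      q = monomial (ρ q).2 1 * F (ρ q).1 := by
    intro q hq
    rw [hρ]
    simp only
    rw [dif_pos (hex q hq)]
    exact (hex q hq).choose_spec
  have hinj : ∀ q1 ∈ c.support, ∀ q2 ∈ c.support, ρ q1 = ρ q2 → q1 = q2 := by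
    intro q1 h1 q2 h2 he
    rw [(hρP q1 h1).2.2, (hρP q2 h2).2.2, he]
  have hTcond : ∀ pr ∈ c.support.image ρ, pr.1 ∈ minGens J ∧ minGeMax pr.1 pr.2 := by
    intro pr hpr
    obtain ⟨q, hq, rfl⟩ := Finset.mem_image.mp hpr
    exact ⟨(hρP q hq).1, (hρP q hq).2.1⟩
  have hsum : ∑ pr ∈ c.support.image ρ,
      (fun pr : Mon n × Mon n => c (monomial pr.2 1 * F pr.1)) pr
        • (monomial pr.2 1 * F pr.1) = p := by
    rw [Finset.sum_image hinj, ← hcsum, Finsupp.sum]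
    refine Finset.sum_congr rfl (fun q hq => ?_)
    have e := (hρP q hq).2.2
    simp only
    rw [← e]
  rw [← hsum] at hpN ⊢
  exact indep hJ hF (c.support.image ρ) hTcond _ hpN

lemma codis_dir (hJ : IsStronglyStable J) (hF : IsMarkedSet J F) :
    Codisjoint (Submodule.restrictScalars A (markedIdeal J F)) (nSpan A J) := by
  rw [codisjoint_iff, eq_top_iff]
  intro p _
  rw [p.as_sum]
  refine Submodule.sum_mem _ (fun η hη => ?_)
  have hsm : (monomial η (p.coeff η) : MvPolynomial (Fin (n + 1)) A)
      = p.coeff η • monomial η 1 := by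
    rw [MvPolynomial.smul_monomial, smul_eq_mul, mul_one]
  by_cases hin : η ∈ J
  · obtain ⟨α, δ, hα, hmm, heq⟩ := exists_factorization hJ (mdeg η) η le_rfl hin
    have h1 := red hJ hF δ α hα hmm
    rw [heq] at h1
    have h2 : Submodule.span A (FSet J F (mdeg η)) ⊔ nSpan A J
        ≤ Submodule.restrictScalars A (markedIdeal J F) ⊔ nSpan A J :=
      sup_le_sup_right FSet_le_markedIdeal _
    rw [hsm]
    exact Submodule.smul_mem _ _ (h2 h1)
  · rw [hsm]
    exact Submodule.smul_mem _ _ (Submodule.mem_sup_right (mem_nSpan_monomial hin 1))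


end RingAux
end MarkedFamilies
end

open MvPolynomial MarkedFamilies in
/-- Buchberger-type criterion: `F_J` is a marked basis iff
`x_i f_α ∈ ⟨F_J^{(deg α + 1)}⟩` for every `i > min x^α`, iff every Eliahou–Kervaire
S-polynomial lies in `⟨F_J^{(s)}⟩`. -/
theorem stmt_15 {n : ℕ} {A : Type*} [CommRing A] [IsNoetherianRing A]
    (J : Set (Mon n)) (hJ : IsStronglyStable J)
    (F : Mon n → MvPolynomial (Fin (n + 1)) A) (hF : IsMarkedSet J F) :
    (IsMarkedBasis J F ↔
      ∀ α ∈ minGens J, ∀ i : Fin (n + 1), (∃ j : Fin (n + 1), α j ≠ 0 ∧ j < i) →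
        MvPolynomial.X i * F α ∈ Submodule.span A (FSet J F (mdeg α + 1))) ∧
    (IsMarkedBasis J F ↔
      ∀ α ∈ minGens J, ∀ β ∈ minGens J, ∀ i : Fin (n + 1), ∀ ν : Mon n,
        (∃ j : Fin (n + 1), α j ≠ 0 ∧ j < i) → minGeMax β ν →
        Finsupp.single i 1 + α = β + ν →
        MvPolynomial.X i * F α - monomial ν (1 : A) * F β ∈
          Submodule.span A (FSet J F (mdeg α + 1))) := by
  have main : IsMarkedBasis J F ↔
      ∀ α ∈ minGens J, ∀ i : Fin (n + 1), (∃ j : Fin (n + 1), α j ≠ 0 ∧ j < i) →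
        MvPolynomial.X i * F α ∈ Submodule.span A (FSet J F (mdeg α + 1)) := by
    constructor
    · intro hB α hα i _
      exact forward_dir hJ hF hB hα i
    · intro hyp
      refine ⟨hF, ?_, codis_dir hJ hF⟩
      exact Submodule.disjoint_def.mpr (fun p h1 h2 => disj_dir hJ hF hyp p h1 h2)
  have memF : ∀ (β ν : Mon n), β ∈ minGens J → minGeMax β ν →
      mdeg β + mdeg ν = mdeg (β + ν) →
      monomial ν (1 : A) * F β ∈ Submodule.span A (FSet J F (mdeg β + mdeg ν)) :=
    fun β ν hβ hmm _ => Submodule.subset_span (mem_FSet (F := F) ν hβ hmm)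
  refine ⟨main, main.trans ?_⟩
  constructor
  · intro hyp α hα β hβ i ν hwit hmm heq
    have h1 := hyp α hα i hwit
    have h2 : monomial ν (1 : A) * F β ∈ Submodule.span A (FSet J F (mdeg β + mdeg ν)) :=
      memF β ν hβ hmm (mdeg_add β ν).symm
    have h4 : mdeg β + mdeg ν = mdeg α + 1 := by
      have h5 : mdeg (Finsupp.single i 1 + α) = mdeg (β + ν) := by rw [heq]
      rw [mdeg_add, mdeg_add, mdeg_single] at h5
      omega
    rw [h4] at h2
    exact Submodule.sub_mem _ h1 h2
  · intro hyp2 α hα i hwit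
    have hη : α + Finsupp.single i 1 ∈ J := hJ.1 α hα.1 _
    have hη' : Finsupp.single i 1 + α ∈ J := by rwa [add_comm] at hη
    obtain ⟨β, ν, hβ, hmm, heq⟩ :=
      exists_factorization hJ (mdeg (Finsupp.single i 1 + α)) _ le_rfl hη'
    have hs := hyp2 α hα β hβ i ν hwit hmm heq.symm
    have h2 : monomial ν (1 : A) * F β ∈ Submodule.span A (FSet J F (mdeg β + mdeg ν)) :=
      memF β ν hβ hmm (mdeg_add β ν).symm
    have h4 : mdeg β + mdeg ν = mdeg α + 1 := by
      have h5 : mdeg (β + ν) = mdeg (Finsupp.single i 1 + α) := by rw [heq]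
      rw [mdeg_add, mdeg_add, mdeg_single] at h5
      omega
    rw [h4] at h2
    have h3 : MvPolynomial.X i * F α
        = (MvPolynomial.X i * F α - monomial ν (1 : A) * F β) + monomial ν (1 : A) * F β := by
      ring
    rw [h3]
    exact Submodule.add_mem _ hs h2
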